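/- Let H ∈ (0,1/2) and δ ∈ (0,H), and set γ = 2/(1-2δ). Then for the power-law kernel K(t)=t^{H-1/2} and its ε-shift K^ε(t)=(t+ε)^{H-1/2}, the L^γ([0,T]) distance satisfies ‖K - K^ε‖_{L^γ([0,T])} ≤ ε^{H-δ} / √(H-δ) for every ε > 0 and T > 0. -/
import Mathlib

open Real MeasureTheory

lemma aux_rpow_sub (x y p : ℝ) (hy : 0 ≤ y) (hxy : y ≤ x) (hp : 1 ≤ p) :
    (x - y) ^ p ≤ x ^ p - y ^ p := by
  have hx : 0 ≤ x := hy.trans hxy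
  have key : ∀ a b : ℝ, 0 ≤ a → 0 ≤ b → a ^ p + b ^ p ≤ (a + b) ^ p := by
    intro a b ha hb
    lift a to NNReal using ha
    lift b to NNReal using hb
    have h := NNReal.rpow_add_rpow_le_add a b hp
    have hp0 : 0 < p := lt_of_lt_of_le one_pos hp
    have h2 := NNReal.rpow_le_rpow h hp0.le
    rw [← NNReal.rpow_mul, one_div, inv_mul_cancel₀ hp0.ne', NNReal.rpow_one] at h2
    have := NNReal.coe_le_coe.mpr h2
    push_cast at this ⊢
    convert this using 2
  have := key (x - y) y (by linarith) hy
  have hxx : x - y + y = x := by ring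
  rw [hxx] at this
  linarith

/-- Rate of convergence of the shifted power-law kernel: for `δ ∈ (0,H)` and
`γ = 2/(1-2δ)`, the `L^γ([0,T])` distance is at most `ε^{H-δ}/√(H-δ)`. -/
theorem stmt_6 (H δ γ T ε : ℝ) (hH : H ∈ Set.Ioo (0:ℝ) (1/2))
    (hδ : δ ∈ Set.Ioo (0:ℝ) H) (hγ : γ = 2 / (1 - 2*δ)) (hT : 0 < T) (hε : 0 < ε) :
    (∫ s in (0:ℝ)..T, |s ^ (H - 1/2) - (s + ε) ^ (H - 1/2)| ^ γ) ^ (1/γ) ≤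
      ε ^ (H - δ) / Real.sqrt (H - δ) := by
  obtain ⟨hH0, hH2⟩ := hH
  obtain ⟨hδ0, hδH⟩ := hδ
  set a : ℝ := H - 1/2 with ha
  have h2δ : 0 < 1 - 2*δ := by nlinarith
  have hγ2 : γ * (1 - 2*δ) = 2 := by rw [hγ]; field_simp
  have hγpos : 0 < γ := by rw [hγ]; positivity
  have hγ1 : 2 ≤ γ := by nlinarith
  have hHδ : 0 < H - δ := by linarith
  set p : ℝ := γ * (H - δ) with hpdef
  have hp0 : 0 < p := by positivity
  have hap : a * γ + 1 = p := by
    have : γ * (1/2 - δ) = 1 := by nlinarith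
    rw [hpdef, ha]; nlinarith
  have haγ : -1 < a * γ := by linarith
  -- pointwise bound on Ioc 0 T
  have hpt : ∀ s ∈ Set.Ioc (0:ℝ) T,
      |s ^ a - (s + ε) ^ a| ^ γ ≤ s ^ (a * γ) - (s + ε) ^ (a * γ) := by
    intro s hs
    have hs0 : 0 < s := hs.1
    have hsε : 0 < s + ε := by linarith
    have hle : (s + ε) ^ a ≤ s ^ a :=
      Real.rpow_le_rpow_of_nonpos hs0 (by linarith) (by rw [ha]; linarith)
    have habs : |s ^ a - (s + ε) ^ a| = s ^ a - (s + ε) ^ a := abs_of_nonneg (by linarith)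
    rw [habs]
    have := aux_rpow_sub (s ^ a) ((s + ε) ^ a) γ (Real.rpow_nonneg hsε.le a) hle
      (by linarith)
    calc (s ^ a - (s + ε) ^ a) ^ γ ≤ (s ^ a) ^ γ - ((s + ε) ^ a) ^ γ := this
    _ = s ^ (a * γ) - (s + ε) ^ (a * γ) := by
        rw [← Real.rpow_mul hs0.le, ← Real.rpow_mul hsε.le]
  -- integrability
  have hig1 : IntervalIntegrable (fun s : ℝ => s ^ (a * γ)) volume 0 T :=
    intervalIntegral.intervalIntegrable_rpow' haγ
  have hig2 : IntervalIntegrable (fun s : ℝ => (s + ε) ^ (a * γ)) volume 0 T := by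
    apply ContinuousOn.intervalIntegrable
    apply ContinuousOn.rpow_const (by fun_prop)
    intro x hx
    rw [Set.uIcc_of_le hT.le] at hx
    left; nlinarith [hx.1]
  have hfm : AEStronglyMeasurable (fun s : ℝ => |s ^ a - (s + ε) ^ a| ^ γ)
      (volume.restrict (Set.Ioc 0 T)) := by
    apply ContinuousOn.aestronglyMeasurable _ measurableSet_Ioc
    apply ContinuousOn.rpow_const _ (fun x _ => Or.inr hγpos.le)
    apply ContinuousOn.abs
    apply ContinuousOn.sub
    · exact ContinuousOn.rpow_const continuousOn_id (fun x hx => Or.inl hx.1.ne')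
    · exact ContinuousOn.rpow_const (by fun_prop) (fun x hx => Or.inl (by nlinarith [hx.1]))
  have higf : IntegrableOn (fun s : ℝ => |s ^ a - (s + ε) ^ a| ^ γ) (Set.Ioc 0 T) volume := by
    apply Integrable.mono' ((intervalIntegrable_iff_integrableOn_Ioc_of_le hT.le).mp hig1)
      hfm
    rw [ae_restrict_iff' measurableSet_Ioc]
    filter_upwards with s hs
    have h1 := hpt s hs
    have h2 : (0:ℝ) ≤ (s + ε) ^ (a * γ) := Real.rpow_nonneg (by linarith [hs.1]) _
    rw [Real.norm_eq_abs, abs_of_nonneg (Real.rpow_nonneg (abs_nonneg _) γ)]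
    linarith
  have higf' : IntervalIntegrable (fun s : ℝ => |s ^ a - (s + ε) ^ a| ^ γ) volume 0 T :=
    (intervalIntegrable_iff_integrableOn_Ioc_of_le hT.le).mpr higf
  -- bound the integral
  have hI1 : (∫ s in (0:ℝ)..T, |s ^ a - (s + ε) ^ a| ^ γ) ≤
      ∫ s in (0:ℝ)..T, (s ^ (a * γ) - (s + ε) ^ (a * γ)) := by
    rw [intervalIntegral.integral_of_le hT.le, intervalIntegral.integral_of_le hT.le]
    apply setIntegral_mono_on higf ((intervalIntegrable_iff_integrableOn_Ioc_of_le hT.le).mp (hig1.sub hig2)) measurableSet_Ioc hpt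
  have hI2 : (∫ s in (0:ℝ)..T, (s ^ (a * γ) - (s + ε) ^ (a * γ))) ≤ ε ^ p / p := by
    rw [intervalIntegral.integral_sub hig1 hig2]
    have e1 : (∫ s in (0:ℝ)..T, s ^ (a * γ)) = T ^ p / p := by
      rw [integral_rpow (Or.inl haγ), hap, Real.zero_rpow hp0.ne', sub_zero]
    have e2 : (∫ s in (0:ℝ)..T, (s + ε) ^ (a * γ)) = ((T + ε) ^ p - ε ^ p) / p := by
      rw [intervalIntegral.integral_comp_add_right (fun s => s ^ (a * γ)) ε, zero_add,
        integral_rpow (Or.inl haγ), hap]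
    rw [e1, e2]
    have : T ^ p ≤ (T + ε) ^ p := Real.rpow_le_rpow hT.le (by linarith) hp0.le
    rw [div_sub_div_same, div_le_div_iff_of_pos_right hp0]
    linarith
  have hInn : (0:ℝ) ≤ ∫ s in (0:ℝ)..T, |s ^ a - (s + ε) ^ a| ^ γ := by
    apply intervalIntegral.integral_nonneg hT.le
    intro s _
    exact Real.rpow_nonneg (abs_nonneg _) γ
  have hmono : (∫ s in (0:ℝ)..T, |s ^ a - (s + ε) ^ a| ^ γ) ^ (1/γ) ≤ (ε ^ p / p) ^ (1/γ) :=
    Real.rpow_le_rpow hInn (hI1.trans hI2) (by positivity)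
  refine hmono.trans ?_
  -- final computation
  have e3 : (ε ^ p / p) ^ (1/γ) = ε ^ (H - δ) / p ^ (1/γ) := by
    rw [Real.div_rpow (Real.rpow_nonneg hε.le p) hp0.le, ← Real.rpow_mul hε.le]
    congr 1
    rw [hpdef]
    field_simp
  rw [e3, Real.sqrt_eq_rpow]
  apply div_le_div_of_nonneg_left (Real.rpow_nonneg hε.le _)
    (Real.rpow_pos_of_pos hHδ _)
  -- (H-δ)^(1/2) ≤ p^(1/γ)
  rcases le_or_gt 1 p with hp1 | hp1
  · calc (H - δ) ^ ((1:ℝ)/2) ≤ 1 ^ ((1:ℝ)/2) :=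
        Real.rpow_le_rpow hHδ.le (by linarith) (by norm_num)
    _ = 1 := Real.one_rpow _
    _ ≤ p ^ (1/γ) := Real.one_le_rpow hp1 (by positivity)
  · calc (H - δ) ^ ((1:ℝ)/2) ≤ p ^ ((1:ℝ)/2) :=
        Real.rpow_le_rpow hHδ.le (by nlinarith) (by norm_num)
    _ ≤ p ^ (1/γ) := by
        apply Real.rpow_le_rpow_of_exponent_ge hp0 hp1.le
        rw [div_le_div_iff₀ hγpos two_pos]
        linarith
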